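/- Let p ≥ 2 and let ψ(t) = b_0 t^q + b_1 t^{q-1} + ... + b_{q+s} t^{-s} be a Laurent polynomial such that the map t ↦ (t^p, ψ(t)) from ℂ* to ℂ² is injective and ψ is not a function of t^p (i.e. the curve is not multiply covered). Then there is exactly one exponent d appearing in ψ with nonzero coefficient such that d is not divisible by p; all other monomials of ψ are powers of t^p. -/

import Mathlib

open Polynomial Finset

/-- If `p ≥ 2` and the Laurent polynomial `ψ(t) = ∑ c_i t^i` is such that
`t ↦ (t^p, ψ(t))` is injective on `ℂ*` and `ψ` is not a function of `t^p`, then exactly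
one exponent with nonzero coefficient is not divisible by `p`. -/
theorem laurent_injective_one_nondivisible_exponent
    (p : ℕ) (hp : 2 ≤ p) (c : ℤ →₀ ℂ)
    (hinj : Set.InjOn (fun t : ℂ => (t ^ p, ∑ i ∈ c.support, c i * t ^ i))
      {t : ℂ | t ≠ 0})
    (hprim : ¬ ∀ i ∈ c.support, (p : ℤ) ∣ i) :
    ∃! d : ℤ, d ∈ c.support ∧ ¬ (p : ℤ) ∣ d := by
  push_neg at hprim
  obtain ⟨d₁, hd₁s, hd₁⟩ := hprim
  refine ⟨d₁, ⟨hd₁s, hd₁⟩, ?_⟩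
  rintro d₂ ⟨hd₂s, hd₂⟩
  by_contra hne
  have hp0 : p ≠ 0 := by omega
  obtain ⟨ζ, hζ⟩ : ∃ ζ : ℂ, IsPrimitiveRoot ζ p :=
    ⟨Complex.exp (2 * Real.pi * Complex.I / p), Complex.isPrimitiveRoot_exp p hp0⟩
  have hζ1 : ζ ≠ 1 := by
    intro h
    have : p ∣ 1 := hζ.dvd_of_pow_eq_one 1 (by simp [h])
    rw [Nat.dvd_one] at this
    omega
  -- the set of bad exponents
  set S : Finset ℤ := c.support.filter (fun i => ¬ (p : ℤ) ∣ i) with hS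
  have hd₁S : d₁ ∈ S := by simp [hS, Finset.mem_filter, hd₁s, hd₁]
  have hd₂S : d₂ ∈ S := by simp [hS, Finset.mem_filter, hd₂s, hd₂]
  have hSne : S.Nonempty := ⟨d₁, hd₁S⟩
  set m : ℤ := S.min' hSne with hm
  set M : ℤ := S.max' hSne with hM
  have hmle : ∀ i ∈ S, m ≤ i := fun i hi => Finset.min'_le S i hi
  have hleM : ∀ i ∈ S, i ≤ M := fun i hi => Finset.le_max' S i hi
  have hmM : m < M := by
    rcases lt_or_ge m M with h | h
    · exact h
    · exfalso
      have h1 : d₁ = m := le_antisymm ((hleM d₁ hd₁S).trans h) (hmle d₁ hd₁S)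
      have h2 : d₂ = m := le_antisymm ((hleM d₂ hd₂S).trans h) (hmle d₂ hd₂S)
      exact hne (h2.trans h1.symm)
  have hcoef : ∀ i ∈ S, c i * (ζ ^ i - 1) ≠ 0 := by
    intro i hi
    rw [hS, Finset.mem_filter] at hi
    refine mul_ne_zero (Finsupp.mem_support_iff.mp hi.1) ?_
    rw [sub_ne_zero]
    exact fun h => hi.2 ((hζ.zpow_eq_one_iff_dvd i).mp h)
  -- the polynomial
  set P : Polynomial ℂ := ∑ i ∈ S, C (c i * (ζ ^ i - 1)) * X ^ (i - m).toNat with hP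
  have hcoeff : ∀ j ∈ S, P.coeff ((j - m).toNat) = c j * (ζ ^ j - 1) := by
    intro j hj
    rw [hP, Polynomial.finset_sum_coeff]
    rw [Finset.sum_eq_single j]
    · rw [coeff_C_mul_X_pow, if_pos rfl]
    · intro i hi hij
      rw [coeff_C_mul_X_pow, if_neg]
      intro h
      apply hij
      have : i - m = j - m := by
        have h1 := Int.toNat_of_nonneg (sub_nonneg.mpr (hmle i hi))
        have h2 := Int.toNat_of_nonneg (sub_nonneg.mpr (hmle j hj))
        omega
      omega
    · intro h; exact absurd hj h
  have hP0 : P.coeff 0 ≠ 0 := by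
    have := hcoeff m (S.min'_mem hSne)
    simp only [sub_self, Int.toNat_zero] at this
    rw [this]
    exact hcoef m (S.min'_mem hSne)
  have hPM : P.coeff ((M - m).toNat) ≠ 0 := by
    rw [hcoeff M (S.max'_mem hSne)]
    exact hcoef M (S.max'_mem hSne)
  have hdeg : 0 < P.degree := by
    have h1 : ((M - m).toNat : WithBot ℕ) ≤ P.degree := Polynomial.le_degree_of_ne_zero hPM
    have h2 : 0 < (M - m).toNat := by omega
    calc (0 : WithBot ℕ) < ((M - m).toNat : WithBot ℕ) := by exact_mod_cast h2
      _ ≤ P.degree := h1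
  obtain ⟨t₀, ht₀⟩ := Complex.exists_root hdeg
  have ht₀0 : t₀ ≠ 0 := by
    intro h
    rw [h] at ht₀
    exact hP0 (by rwa [Polynomial.coeff_zero_eq_eval_zero])
  -- evaluate
  have heval : ∑ i ∈ S, c i * (ζ ^ i - 1) * t₀ ^ i = 0 := by
    have : ∑ i ∈ S, c i * (ζ ^ i - 1) * t₀ ^ i = t₀ ^ m * P.eval t₀ := by
      rw [hP, Polynomial.eval_finset_sum, Finset.mul_sum]
      refine Finset.sum_congr rfl fun i hi => ?_
      rw [Polynomial.eval_mul, Polynomial.eval_pow, Polynomial.eval_C, Polynomial.eval_X]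
      have h1 : t₀ ^ ((i - m).toNat) = t₀ ^ (i - m) := by
        rw [← zpow_natCast, Int.toNat_of_nonneg (sub_nonneg.mpr (hmle i hi))]
      have h2 : t₀ ^ m * t₀ ^ (i - m) = t₀ ^ i := by
        rw [← zpow_add₀ ht₀0]; ring_nf
      rw [h1, ← h2]
      ring
    rw [this, ht₀.eq_zero, mul_zero]
  have hsum : ∑ i ∈ c.support, c i * (ζ * t₀) ^ i = ∑ i ∈ c.support, c i * t₀ ^ i := by
    rw [← sub_eq_zero, ← Finset.sum_sub_distrib]
    have hterm : ∀ i : ℤ, c i * (ζ * t₀) ^ i - c i * t₀ ^ i = c i * (ζ ^ i - 1) * t₀ ^ i := by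
      intro i
      rw [mul_zpow]
      ring
    calc ∑ i ∈ c.support, (c i * (ζ * t₀) ^ i - c i * t₀ ^ i)
        = ∑ i ∈ c.support, c i * (ζ ^ i - 1) * t₀ ^ i :=
          Finset.sum_congr rfl fun i _ => hterm i
      _ = ∑ i ∈ S, c i * (ζ ^ i - 1) * t₀ ^ i := by
          refine (Finset.sum_subset (Finset.filter_subset _ _) ?_).symm
          intro i hi hiS
          have : (p : ℤ) ∣ i := by
            by_contra h
            exact hiS (by simp [hS, Finset.mem_filter, hi, h])
          rw [(hζ.zpow_eq_one_iff_dvd i).mpr this]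
          simp
      _ = 0 := heval
  -- contradiction with injectivity
  have hζ0 : ζ ≠ 0 := fun h => by
    have := hζ.pow_eq_one
    rw [h, zero_pow hp0] at this
    exact zero_ne_one this
  have hζt₀ : ζ * t₀ ≠ 0 := mul_ne_zero hζ0 ht₀0
  have hpair : (fun t : ℂ => (t ^ p, ∑ i ∈ c.support, c i * t ^ i)) (ζ * t₀)
      = (fun t : ℂ => (t ^ p, ∑ i ∈ c.support, c i * t ^ i)) t₀ := by
    simp only [Prod.mk.injEq]
    constructor
    · rw [mul_pow, hζ.pow_eq_one, one_mul]
    · exact hsum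
  have := hinj hζt₀ ht₀0 hpair
  have hz1 : ζ = 1 := by
    refine mul_right_cancel₀ ht₀0 ?_
    rw [one_mul]; exact this
  exact hζ1 hz1
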